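/- (Shimizu's lemma) Let Γ be a discrete subgroup of SL(2,ℂ) containing the parabolic matrix A = [[1,1],[0,1]]. If B = [[a,b],[c,d]] ∈ Γ with c ≠ 0, then |c| ≥ 1. -/

import Mathlib

open Matrix

/-- Topology on `SL(2,ℂ)` induced from the (entrywise) topology on matrices. -/
noncomputable instance : TopologicalSpace (Matrix.SpecialLinearGroup (Fin 2) ℂ) :=
  TopologicalSpace.induced (fun g => (g : Matrix (Fin 2) (Fin 2) ℂ)) inferInstance

/-- The parabolic matrix `[[1,1],[0,1]]` in `SL(2,ℂ)`. -/
def shimizuA : Matrix.SpecialLinearGroup (Fin 2) ℂ :=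
  ⟨!![1, 1; 0, 1], by norm_num [Matrix.det_fin_two_of]⟩

open Complex Filter

lemma shimizuA_coe : (shimizuA : Matrix (Fin 2) (Fin 2) ℂ) = !![1, 1; 0, 1] := rfl

lemma shimizu_conjA_coe (g : Matrix.SpecialLinearGroup (Fin 2) ℂ) :
    ((g * shimizuA * g⁻¹ : Matrix.SpecialLinearGroup (Fin 2) ℂ) : Matrix (Fin 2) (Fin 2) ℂ) =
      !![1 - (g : Matrix (Fin 2) (Fin 2) ℂ) 0 0 * (g : Matrix (Fin 2) (Fin 2) ℂ) 1 0,
         (g : Matrix (Fin 2) (Fin 2) ℂ) 0 0 ^ 2;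
         -((g : Matrix (Fin 2) (Fin 2) ℂ) 1 0 ^ 2),
         1 + (g : Matrix (Fin 2) (Fin 2) ℂ) 0 0 * (g : Matrix (Fin 2) (Fin 2) ℂ) 1 0] := by
  obtain ⟨a, b, c, d, hg⟩ : ∃ a b c d, (g : Matrix (Fin 2) (Fin 2) ℂ) = !![a, b; c, d] :=
    ⟨_, _, _, _, (Matrix.etaExpand_eq _).symm⟩
  have hdet : a * d - b * c = 1 := by
    have := g.2
    rw [Matrix.det_fin_two, hg] at this
    simpa using this
  rw [Matrix.SpecialLinearGroup.coe_mul, Matrix.SpecialLinearGroup.coe_mul,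
    Matrix.SpecialLinearGroup.coe_inv, hg, Matrix.adjugate_fin_two]
  show _ = !![1 - a * c, a ^ 2; -(c ^ 2), 1 + a * c]
  simp only [shimizuA]
  ext i j
  fin_cases i <;> fin_cases j <;>
    simp [Matrix.mul_apply, Fin.sum_univ_two] <;>
    first | linear_combination hdet | linear_combination -hdet | linear_combination c * hdet | linear_combination (-c) * hdet | ring

/-- The iterated conjugation sequence used in the proof of Shimizu's lemma. -/
noncomputable def shimizuSeq (B : Matrix.SpecialLinearGroup (Fin 2) ℂ) :
    ℕ → Matrix.SpecialLinearGroup (Fin 2) ℂ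
  | 0 => B
  | n + 1 => shimizuSeq B n * shimizuA * (shimizuSeq B n)⁻¹

/-- Shimizu's lemma: if `Γ ≤ SL(2,ℂ)` is discrete and contains `[[1,1],[0,1]]`,
then any `B = [[a,b],[c,d]] ∈ Γ` with `c ≠ 0` satisfies `|c| ≥ 1`. -/
theorem shimizu_lemma (Γ : Subgroup (Matrix.SpecialLinearGroup (Fin 2) ℂ))
    (hΓ : DiscreteTopology Γ) (hA : shimizuA ∈ Γ)
    (B : Matrix.SpecialLinearGroup (Fin 2) ℂ) (hB : B ∈ Γ)
    (hc : (B : Matrix (Fin 2) (Fin 2) ℂ) 1 0 ≠ 0) :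
    1 ≤ ‖(B : Matrix (Fin 2) (Fin 2) ℂ) 1 0‖ := by
  by_contra h
  push_neg at h
  set a : ℕ → ℂ := fun n => ((shimizuSeq B n : Matrix.SpecialLinearGroup (Fin 2) ℂ) :
    Matrix (Fin 2) (Fin 2) ℂ) 0 0 with ha_def
  set c : ℕ → ℂ := fun n => ((shimizuSeq B n : Matrix.SpecialLinearGroup (Fin 2) ℂ) :
    Matrix (Fin 2) (Fin 2) ℂ) 1 0 with hc_def
  have hcoe : ∀ n, ((shimizuSeq B (n + 1) : Matrix.SpecialLinearGroup (Fin 2) ℂ) :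
      Matrix (Fin 2) (Fin 2) ℂ) = !![1 - a n * c n, a n ^ 2; -(c n ^ 2), 1 + a n * c n] :=
    fun n => shimizu_conjA_coe (shimizuSeq B n)
  have ha_rec : ∀ n, a (n + 1) = 1 - a n * c n := by
    intro n; simp only [ha_def]; rw [hcoe n]; simp [ha_def, hc_def]
  have hc_rec : ∀ n, c (n + 1) = -(c n ^ 2) := by
    intro n; simp only [hc_def]; rw [hcoe n]; simp [ha_def, hc_def]
  have hcne : ∀ n, c n ≠ 0 := by
    intro n
    induction n with
    | zero => exact hc
    | succ n ih => rw [hc_rec n]; exact neg_ne_zero.mpr (pow_ne_zero 2 ih)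
  have hmemΓ : ∀ n, shimizuSeq B n ∈ Γ := by
    intro n
    induction n with
    | zero => exact hB
    | succ n ih => exact Γ.mul_mem (Γ.mul_mem ih hA) (Γ.inv_mem ih)
  set r : ℝ := ‖(B : Matrix (Fin 2) (Fin 2) ℂ) 1 0‖ with hr_def
  have hr0 : 0 < r := norm_pos_iff.mpr hc
  have hr1 : r < 1 := h
  set K : ℝ := max (‖(B : Matrix (Fin 2) (Fin 2) ℂ) 0 0‖) (1 / (1 - r)) with hK_def
  have h1r : 0 < 1 - r := by linarith
  have hK1 : 1 ≤ K := le_trans (by rw [le_div_iff₀ h1r]; nlinarith) (le_max_right _ _)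
  have hKr : 1 + K * r ≤ K := by
    have hd : 1 / (1 - r) ≤ K := le_max_right _ _
    rw [div_le_iff₀ h1r] at hd
    nlinarith
  have key : ∀ n, ‖c n‖ ≤ r ^ (n + 1) ∧ ‖a n‖ ≤ K := by
    intro n
    induction n with
    | zero => exact ⟨by rw [pow_one]; exact le_of_eq rfl, le_max_left _ _⟩
    | succ n ih =>
      obtain ⟨ihc, iha⟩ := ih
      have hcr : ‖c n‖ ≤ r :=
        le_trans ihc (pow_le_of_le_one hr0.le hr1.le n.succ_ne_zero)
      constructor
      · rw [hc_rec n, norm_neg, norm_pow]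
        calc ‖c n‖ ^ 2 ≤ (r ^ (n + 1)) ^ 2 :=
              pow_le_pow_left₀ (norm_nonneg _) ihc 2
          _ = r ^ (2 * n + 2) := by ring
          _ ≤ r ^ (n + 2) := pow_le_pow_of_le_one hr0.le hr1.le (by omega)
      · rw [ha_rec n]
        calc ‖1 - a n * c n‖ ≤ ‖(1:ℂ)‖ + ‖-(a n * c n)‖ :=
              norm_add_le 1 (-(a n * c n)) |>.trans_eq' (by rw [sub_eq_add_neg])
          _ = 1 + ‖a n‖ * ‖c n‖ := by
              rw [norm_neg, norm_mul, norm_one]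
          _ ≤ 1 + K * r := by
              have h1 : ‖a n‖ * ‖c n‖ ≤ K * r :=
                mul_le_mul iha hcr (norm_nonneg _)
                  (le_trans (norm_nonneg _) iha)
              linarith
          _ ≤ K := hKr
  set E : ℕ → ℝ := fun n => K * (2 + K) * r ^ (n + 1) with hE_def
  have hEnt : ∀ n i j, ‖
      ((shimizuSeq B (n + 2) : Matrix.SpecialLinearGroup (Fin 2) ℂ) :
        Matrix (Fin 2) (Fin 2) ℂ) i j - (shimizuA : Matrix (Fin 2) (Fin 2) ℂ) i j‖ ≤ E n := by
    intro n i j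
    obtain ⟨hcn, han⟩ := key n
    obtain ⟨hcn1, han1⟩ := key (n + 1)
    have hrpow2 : r ^ (2 * (n + 2)) ≤ r ^ (n + 1) :=
      pow_le_pow_of_le_one hr0.le hr1.le (by omega)
    have hrn : (0:ℝ) ≤ r ^ (n + 1) := pow_nonneg hr0.le _
    have hrn2 : (0:ℝ) ≤ r ^ (n + 2) := pow_nonneg hr0.le _
    have hrpow1 : r ^ (n + 2) ≤ r ^ (n + 1) :=
      pow_le_pow_of_le_one hr0.le hr1.le (by omega)
    have hK0 : (0:ℝ) < K := lt_of_lt_of_le one_pos hK1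
    have hac : ‖a (n+1) * c (n+1)‖ ≤ E n := by
      rw [norm_mul]
      calc ‖a (n+1)‖ * ‖c (n+1)‖ ≤ K * r ^ (n + 2) :=
            mul_le_mul han1 hcn1 (norm_nonneg _)
              (le_trans (norm_nonneg _) han1)
        _ ≤ K * r ^ (n + 1) := mul_le_mul_of_nonneg_left hrpow1 hK0.le
        _ ≤ E n := by
            simp only [hE_def]
            nlinarith [mul_nonneg (mul_nonneg hK0.le hrn) (by linarith : (0:ℝ) ≤ 1 + K)]
    have hsq : ‖a (n+1) ^ 2 - 1‖ ≤ E n := by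
      have hd1 : ‖a (n+1) - 1‖ ≤ K * r ^ (n + 1) := by
        rw [ha_rec n, show (1 : ℂ) - a n * c n - 1 = -(a n * c n) by ring,
          norm_neg, norm_mul]
        exact mul_le_mul han hcn (norm_nonneg _)
          (le_trans (norm_nonneg _) han)
      have hd2 : ‖a (n+1) + 1‖ ≤ K + 1 := by
        calc ‖a (n+1) + 1‖ ≤ ‖a (n+1)‖ + ‖(1:ℂ)‖ :=
              norm_add_le _ _
          _ ≤ K + 1 := by rw [norm_one]; linarith
      calc ‖a (n+1) ^ 2 - 1‖
          = ‖a (n+1) - 1‖ * ‖a (n+1) + 1‖ := by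
            rw [← norm_mul]; ring_nf
        _ ≤ K * r ^ (n+1) * (K + 1) := mul_le_mul hd1 hd2 (norm_nonneg _)
            (by positivity)
        _ ≤ E n := by
            simp only [hE_def]
            nlinarith [mul_nonneg hK0.le hrn]
    have hcsq : ‖c (n+1)‖ ^ 2 ≤ E n := by
      calc ‖c (n+1)‖ ^ 2 ≤ (r ^ (n + 2)) ^ 2 :=
            pow_le_pow_left₀ (norm_nonneg _) hcn1 2
        _ = r ^ (2 * (n + 2)) := by ring
        _ ≤ r ^ (n + 1) := hrpow2
        _ ≤ E n := by
            simp only [hE_def]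
            nlinarith [mul_nonneg (by nlinarith [sq_nonneg K] : (0:ℝ) ≤ K * (2 + K) - 1) hrn]
    rw [show n + 2 = (n + 1) + 1 by ring, hcoe (n + 1), shimizuA_coe]
    fin_cases i <;> fin_cases j <;>
      simp only [Fin.zero_eta, Fin.mk_one, Matrix.of_apply, Matrix.cons_val', Matrix.cons_val_zero,
        Matrix.cons_val_one, Matrix.head_cons, Matrix.empty_val', Matrix.cons_val_fin_one,
        Matrix.head_fin_const]
    · rw [show (1:ℂ) - a (n+1) * c (n+1) - 1 = -(a (n+1) * c (n+1)) by ring,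
        norm_neg]
      exact hac
    · exact hsq
    · rw [show -(c (n+1) ^ 2) - (0:ℂ) = -(c (n+1) ^ 2) by ring,
        norm_neg, norm_pow]
      exact hcsq
    · rw [show (1:ℂ) + a (n+1) * c (n+1) - 1 = a (n+1) * c (n+1) by ring]
      exact hac
  have hE0 : Tendsto E atTop (nhds 0) := by
    have h1 : Tendsto (fun n : ℕ => r ^ n) atTop (nhds 0) :=
      tendsto_pow_atTop_nhds_zero_of_lt_one hr0.le hr1
    have h2 : Tendsto (fun n : ℕ => K * (2 + K) * r * r ^ n) atTop
        (nhds (K * (2 + K) * r * 0)) := h1.const_mul _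
    rw [mul_zero] at h2
    refine h2.congr (fun n => ?_)
    simp only [hE_def]; ring
  have hT : Tendsto (fun n => ((shimizuSeq B (n + 2) : Matrix.SpecialLinearGroup (Fin 2) ℂ) :
      Matrix (Fin 2) (Fin 2) ℂ)) atTop (nhds ((shimizuA : Matrix (Fin 2) (Fin 2) ℂ))) := by
    refine tendsto_pi_nhds.mpr ?_
    intro i
    refine tendsto_pi_nhds.mpr ?_
    intro j
    rw [tendsto_iff_dist_tendsto_zero]
    refine squeeze_zero (fun n => dist_nonneg) (fun n => ?_) hE0
    rw [Complex.dist_eq]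
    exact hEnt n i j
  have hsing : IsOpen ({(⟨shimizuA, hA⟩ : Γ)} : Set Γ) := isOpen_discrete _
  rw [isOpen_induced_iff] at hsing
  obtain ⟨U, hUopen, hU⟩ := hsing
  rw [isOpen_induced_iff] at hUopen
  obtain ⟨V, hVopen, hV⟩ := hUopen
  have hAU : shimizuA ∈ U := by
    have : (⟨shimizuA, hA⟩ : Γ) ∈ Subtype.val ⁻¹' U := by rw [hU]; rfl
    exact this
  have hAV : (shimizuA : Matrix (Fin 2) (Fin 2) ℂ) ∈ V := by
    rw [← hV] at hAU; exact hAU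
  have hev : ∀ᶠ n in atTop, ((shimizuSeq B (n + 2) : Matrix.SpecialLinearGroup (Fin 2) ℂ) :
      Matrix (Fin 2) (Fin 2) ℂ) ∈ V := hT (hVopen.mem_nhds hAV)
  obtain ⟨n, hn⟩ := hev.exists
  have hUmem : shimizuSeq B (n + 2) ∈ U := by
    have : shimizuSeq B (n + 2) ∈ (fun g : Matrix.SpecialLinearGroup (Fin 2) ℂ =>
        (g : Matrix (Fin 2) (Fin 2) ℂ)) ⁻¹' V := hn
    rw [hV] at this
    exact this
  have hΓmem : (⟨shimizuSeq B (n + 2), hmemΓ (n + 2)⟩ : Γ) ∈ Subtype.val ⁻¹' U := hUmem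
  rw [hU] at hΓmem
  have heq : shimizuSeq B (n + 2) = shimizuA := congrArg Subtype.val hΓmem
  have hzero : c (n + 2) = 0 := by
    simp only [hc_def]
    rw [heq, shimizuA_coe]
    simp
  exact hcne (n + 2) hzero
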